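/- Let F be a free R-module of rank n over a commutative ring R, π ∈ R, and Π an endomorphism of F represented (in a basis v₁,...,vₙ with Πv₁ = πv₁ and Πvⱼ ∈ span(v₁) − πvⱼ for j ≥ 2) by an upper-triangular matrix with diagonal (π, −π, ..., −π). Then char_{Π|F}(T) = (T+π)^{n−1}(T−π), ∧^n(Π − π·id) = 0, and ∧²(Π + π·id) = 0. -/

import Mathlib

open Polynomial

/-- Let `F = R^n` and let `Π` be the endomorphism whose matrix (in a basis
`v₁,…,vₙ` with `Πv₁ = πv₁` and `Πvⱼ = λⱼv₁ − πvⱼ` for `j ≥ 2`) is upper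
triangular with diagonal `(π, −π, …, −π)`.  Then
`char_{Π}(T) = (T + π)^{n−1}(T − π)`, `∧ⁿ(Π − π·id) = 0` and
`∧²(Π + π·id) = 0` (the wedge of `j` images under the map vanishes in the
exterior algebra). -/
theorem stmt_18 {R : Type*} [CommRing R] (n : ℕ) [NeZero n] (π : R)
    (lam : Fin n → R) (M : Matrix (Fin n) (Fin n) R)
    (hM : ∀ i j, M i j =
      if i = j then (if i = 0 then π else -π) else (if i = 0 then lam j else 0)) :
    M.charpoly = (X + C π) ^ (n - 1) * (X - C π) ∧
    (∀ v : Fin n → (Fin n → R),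
      (List.ofFn fun i => ExteriorAlgebra.ι R
        ((Matrix.toLin' M - π • (LinearMap.id : (Fin n → R) →ₗ[R] (Fin n → R))) (v i))).prod = 0) ∧
    (∀ v : Fin 2 → (Fin n → R),
      (List.ofFn fun i => ExteriorAlgebra.ι R
        ((Matrix.toLin' M + π • (LinearMap.id : (Fin n → R) →ₗ[R] (Fin n → R))) (v i))).prod = 0) := by
  obtain ⟨m, rfl⟩ : ∃ m, n = m + 1 := ⟨n - 1, (Nat.succ_pred_eq_of_pos (Nat.pos_of_ne_zero (NeZero.ne n))).symm⟩
  set f : (Fin (m+1) → R) →ₗ[R] (Fin (m+1) → R) :=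
    Matrix.toLin' M - π • LinearMap.id with hf
  set g : (Fin (m+1) → R) →ₗ[R] (Fin (m+1) → R) :=
    Matrix.toLin' M + π • LinearMap.id with hg
  refine ⟨?_, ?_, ?_⟩
  · have htri : M.BlockTriangular id := by
      intro i j hij
      have h1 : i ≠ j := fun h => absurd (h ▸ hij) (lt_irrefl _)
      have h2 : i ≠ 0 := Fin.pos_iff_ne_zero.mp (lt_of_le_of_lt (Fin.zero_le j) hij)
      simp [hM, h1, h2]
    rw [Matrix.charpoly_of_upperTriangular M htri, Fin.prod_univ_succ]
    have h0 : M 0 0 = π := by rw [hM]; simp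
    have hs : ∀ i : Fin m, M i.succ i.succ = -π := by
      intro i; rw [hM]; simp [Fin.succ_ne_zero]
    rw [h0]
    rw [Finset.prod_congr rfl fun i _ => by rw [hs i]]
    simp [mul_comm, sub_neg_eq_add]
  · intro v
    have key : (ExteriorAlgebra.ιMulti R (m+1)).compLinearMap f = 0 := by
      refine Module.Basis.ext_alternating (Pi.basisFun R (Fin (m+1))) fun w hw => ?_
      obtain ⟨i, hi⟩ : ∃ i, w i = 0 := by
        obtain ⟨i, hi⟩ := (Finite.injective_iff_surjective.mp hw) 0
        exact ⟨i, hi⟩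
      have hcol : f (Pi.basisFun R (Fin (m+1)) (w i)) = 0 := by
        rw [hi]
        ext j
        simp only [hf, LinearMap.sub_apply, LinearMap.smul_apply, LinearMap.id_apply,
          Pi.basisFun_apply, Matrix.toLin'_apply, Pi.sub_apply, Pi.smul_apply, smul_eq_mul]
        rw [Matrix.mulVec_single_one]
        rcases eq_or_ne j 0 with h | h
        · subst h; simp [Matrix.transpose_apply, hM]
        · simp [Matrix.transpose_apply, hM, h]
      simp only [AlternatingMap.compLinearMap_apply, AlternatingMap.zero_apply]
      rw [ExteriorAlgebra.ιMulti_apply]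
      refine List.prod_eq_zero ?_
      rw [List.mem_ofFn]
      exact ⟨i, by
        show ExteriorAlgebra.ι R (f ((Pi.basisFun R (Fin (m+1))) (w i))) = 0
        rw [hcol, map_zero]⟩
    have := congrFun (congrArg DFunLike.coe key) v
    simpa [ExteriorAlgebra.ιMulti_apply, Matrix.vecTail] using this
  · intro v
    have hspan : ∀ x : Fin (m+1) → R, g x = (g x 0) • (Pi.single (0 : Fin (m+1)) (1:R) : Fin (m+1) → R) := by
      intro x
      ext j
      rcases eq_or_ne j 0 with h | h
      · subst h; simp
      · have : g x j = 0 := by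
          simp only [hg, LinearMap.add_apply, LinearMap.smul_apply, LinearMap.id_apply,
            Pi.add_apply, Pi.smul_apply, smul_eq_mul, Matrix.toLin'_apply, Matrix.mulVec]
          have : ∀ k, M j k = if j = k then -π else 0 := by
            intro k; rw [hM]; simp [h]
          simp [dotProduct, this, Finset.sum_ite_eq, mul_comm]
        simp [this, h]
    have h0 := hspan (v 0)
    have h1 := hspan (v 1)
    show (List.ofFn fun i => ExteriorAlgebra.ι R (g (v i))).prod = 0
    rw [List.ofFn_succ, List.ofFn_succ, List.ofFn_zero]
    simp only [List.prod_cons, List.prod_nil, mul_one]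
    rw [hspan (v 0), hspan (v (Fin.succ 0)), map_smul, map_smul, smul_mul_assoc, mul_smul_comm,
      ExteriorAlgebra.ι_sq_zero, smul_zero, smul_zero]
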